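/- arXiv:0707.1722 — 2 statements merged into one kernel-verified Lean document; each statement's English description precedes it below -/
import Mathlib

section
/- For λ ∈ [0,1] and d ≥ 2, the maximal squared output 2-norm of the depolarized Werner–Holevo channel over pure input states equals ((d-2)λ² + 1)/(d-1); i.e., sup over unit vectors ψ of Tr(W_{λ,d}(|ψ⟩⟨ψ|)²) = ((d-2)λ² + 1)/(d-1), and the supremum is attained at ψ = (e₀ + i e₁)/√2. -/
open Matrix Finset Kronecker

noncomputable section

/-- Outer product |ψ⟩⟨ψ|. -/
def outer {n : Type*} [Fintype n] (ψ : n → ℂ) : Matrix n n ℂ :=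
  fun i j => ψ i * star (ψ j)

/-- Outer product |φ⟩⟨χ|. -/
def outerLR {n : Type*} [Fintype n] (φ χ : n → ℂ) : Matrix n n ℂ :=
  fun i j => φ i * star (χ j)

/-- Inner product ⟨φ|χ⟩ (conjugate-linear in the first argument). -/
def cinner {n : Type*} [Fintype n] (φ χ : n → ℂ) : ℂ := ∑ i, star (φ i) * χ i

/-- Entrywise complex conjugate of a vector. -/
def conjVec {n : Type*} (ψ : n → ℂ) : n → ℂ := fun i => star (ψ i)

/-- Depolarized Werner–Holevo channel W_{λ,d}(ρ) = λρ + (1-λ)(Tr(ρ)·1 - ρᵀ)/(d-1). -/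
def WH (d : ℕ) (lam : ℝ) (ρ : Matrix (Fin d) (Fin d) ℂ) : Matrix (Fin d) (Fin d) ℂ :=
  (lam : ℂ) • ρ +
    (((1 - lam : ℝ) : ℂ) * ((d : ℂ) - 1)⁻¹) •
      (ρ.trace • (1 : Matrix (Fin d) (Fin d) ℂ) - ρ.transpose)

/-- Tensor product Φ₁ ⊗ Φ₂ of two linear maps on d×d matrices, acting on d²×d² matrices. -/
def tensorMap {d : ℕ}
    (Φ₁ Φ₂ : Matrix (Fin d) (Fin d) ℂ → Matrix (Fin d) (Fin d) ℂ)
    (M : Matrix (Fin d × Fin d) (Fin d × Fin d) ℂ) :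
    Matrix (Fin d × Fin d) (Fin d × Fin d) ℂ :=
  fun p q => ∑ i, ∑ j, ∑ k, ∑ l,
    M (i, k) (j, l) * (Φ₁ (Matrix.single i j 1)) p.1 q.1 *
      (Φ₂ (Matrix.single k l 1)) p.2 q.2

/-- Partial trace over the first tensor factor. -/
def ptr1 {d : ℕ} (M : Matrix (Fin d × Fin d) (Fin d × Fin d) ℂ) : Matrix (Fin d) (Fin d) ℂ :=
  fun i j => ∑ k, M (k, i) (k, j)

/-- Partial trace over the second tensor factor. -/
def ptr2 {d : ℕ} (M : Matrix (Fin d × Fin d) (Fin d × Fin d) ℂ) : Matrix (Fin d) (Fin d) ℂ :=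
  fun i j => ∑ k, M (i, k) (j, k)

/-- Partial transpose on the first tensor factor. -/
def pt1 {d : ℕ} (M : Matrix (Fin d × Fin d) (Fin d × Fin d) ℂ) :
    Matrix (Fin d × Fin d) (Fin d × Fin d) ℂ :=
  fun p q => M (q.1, p.2) (p.1, q.2)

/-- Partial transpose on the second tensor factor. -/
def pt2 {d : ℕ} (M : Matrix (Fin d × Fin d) (Fin d × Fin d) ℂ) :
    Matrix (Fin d × Fin d) (Fin d × Fin d) ℂ :=
  fun p q => M (p.1, q.2) (q.1, p.2)


lemma trace_outer {n : Type*} [Fintype n] (ψ : n → ℂ) : (outer ψ).trace = cinner ψ ψ := by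
  simp [Matrix.trace, outer, cinner, Matrix.diag, mul_comm]

lemma trace_outer_mul_outer {n : Type*} [Fintype n] (φ χ : n → ℂ) :
    (outer φ * outer χ).trace = cinner χ φ * cinner φ χ := by
  simp only [Matrix.trace, Matrix.diag, Matrix.mul_apply, outer, cinner]
  rw [Finset.sum_mul_sum]
  refine Finset.sum_congr rfl fun i _ => ?_
  refine Finset.sum_congr rfl fun k _ => ?_
  ring

lemma transpose_outer {n : Type*} [Fintype n] (ψ : n → ℂ) :
    (outer ψ)ᵀ = outer (conjVec ψ) := by
  ext i j
  simp [outer, conjVec, Matrix.transpose_apply, mul_comm]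

lemma cinner_conjVec_conjVec {n : Type*} [Fintype n] (ψ : n → ℂ) :
    cinner (conjVec ψ) (conjVec ψ) = cinner ψ ψ := by
  simp [cinner, conjVec, mul_comm]

lemma star_cinner_conj {n : Type*} [Fintype n] (ψ : n → ℂ) :
    cinner ψ (conjVec ψ) = star (cinner (conjVec ψ) ψ) := by
  simp [cinner, conjVec]

lemma trace_WH_sq (d : ℕ) (lam : ℝ) (ψ : Fin d → ℂ) (h : cinner ψ ψ = 1) :
    (WH d lam (outer ψ) * WH d lam (outer ψ)).trace =
      (lam : ℂ)^2
        + 2 * lam * (((1 - lam : ℝ) : ℂ) * ((d : ℂ) - 1)⁻¹)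
            * (1 - (Complex.normSq (cinner (conjVec ψ) ψ) : ℂ))
        + (((1 - lam : ℝ) : ℂ) * ((d : ℂ) - 1)⁻¹)^2 * ((d : ℂ) - 1) := by
  have hs : (Complex.normSq (cinner (conjVec ψ) ψ) : ℂ)
      = cinner ψ (conjVec ψ) * cinner (conjVec ψ) ψ := by
    rw [star_cinner_conj, Complex.normSq_eq_conj_mul_self]
    rfl
  have h1 : (outer ψ * outer ψ).trace = 1 := by
    rw [trace_outer_mul_outer, h, mul_one]
  have h2 : (outer ψ * outer (conjVec ψ)).trace
      = cinner (conjVec ψ) ψ * cinner ψ (conjVec ψ) := trace_outer_mul_outer _ _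
  have h3 : (outer (conjVec ψ) * outer ψ).trace
      = cinner ψ (conjVec ψ) * cinner (conjVec ψ) ψ := trace_outer_mul_outer _ _
  have h4 : (outer (conjVec ψ) * outer (conjVec ψ)).trace = 1 := by
    rw [trace_outer_mul_outer, cinner_conjVec_conjVec, h, mul_one]
  have h5 : (outer ψ).trace = 1 := by rw [trace_outer, h]
  have h6 : (outer (conjVec ψ)).trace = 1 := by
    rw [trace_outer, cinner_conjVec_conjVec, h]
  rw [WH, transpose_outer, h5]
  simp only [one_smul, mul_add, add_mul, Matrix.smul_mul, Matrix.mul_smul, sub_mul, mul_sub,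
    Matrix.mul_one, Matrix.one_mul, Matrix.trace_add, Matrix.trace_sub, Matrix.trace_smul,
    Matrix.trace_one, h1, h2, h3, h4, h5, h6, smul_eq_mul, Fintype.card_fin]
  rw [hs]
  ring

lemma re_trace_WH_sq (d : ℕ) (lam : ℝ) (ψ : Fin d → ℂ) (h : cinner ψ ψ = 1) :
    (WH d lam (outer ψ) * WH d lam (outer ψ)).trace.re =
      lam^2 + 2 * lam * ((1 - lam) * ((d : ℝ) - 1)⁻¹)
          * (1 - Complex.normSq (cinner (conjVec ψ) ψ))
        + ((1 - lam) * ((d : ℝ) - 1)⁻¹)^2 * ((d : ℝ) - 1) := by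
  rw [trace_WH_sq d lam ψ h]
  rw [show ((lam : ℂ)^2
        + 2 * lam * (((1 - lam : ℝ) : ℂ) * ((d : ℂ) - 1)⁻¹)
            * (1 - (Complex.normSq (cinner (conjVec ψ) ψ) : ℂ))
        + (((1 - lam : ℝ) : ℂ) * ((d : ℂ) - 1)⁻¹)^2 * ((d : ℂ) - 1))
      = ((lam^2 + 2 * lam * ((1 - lam) * ((d : ℝ) - 1)⁻¹)
          * (1 - Complex.normSq (cinner (conjVec ψ) ψ))
        + ((1 - lam) * ((d : ℝ) - 1)⁻¹)^2 * ((d : ℝ) - 1) : ℝ) : ℂ) from by push_cast; ring]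
  exact Complex.ofReal_re _

lemma sum_pair {d : ℕ} (hd : 2 ≤ d) (f : Fin d → ℂ) (x y : ℂ)
    (hf : ∀ i, f i = (if i = (⟨0, Nat.lt_of_lt_of_le (by norm_num) hd⟩ : Fin d) then x else 0)
      + (if i = (⟨1, Nat.lt_of_lt_of_le (by norm_num) hd⟩ : Fin d) then y else 0)) :
    ∑ i, f i = x + y := by
  simp only [hf]
  rw [Finset.sum_add_distrib, Finset.sum_ite_eq', Finset.sum_ite_eq']
  simp

lemma hA2 : (((Real.sqrt 2 : ℝ) : ℂ))⁻¹ * (((Real.sqrt 2 : ℝ) : ℂ))⁻¹ = 2⁻¹ := by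
  rw [← mul_inv, ← Complex.ofReal_mul, Real.mul_self_sqrt (by norm_num)]
  norm_num

lemma hAs : star (((Real.sqrt 2 : ℝ) : ℂ))⁻¹ = (((Real.sqrt 2 : ℝ) : ℂ))⁻¹ := by
  rw [← Complex.ofReal_inv]
  exact Complex.conj_ofReal _

lemma psi0_norm {d : ℕ} (hd : 2 ≤ d) :
    cinner (fun i : Fin d =>
        if i = (⟨0, Nat.lt_of_lt_of_le (by norm_num) hd⟩ : Fin d) then ((Real.sqrt 2)⁻¹ : ℂ)
        else if i = (⟨1, Nat.lt_of_lt_of_le (by norm_num) hd⟩ : Fin d) then Complex.I * ((Real.sqrt 2)⁻¹ : ℂ) else 0)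
      (fun i : Fin d =>
        if i = (⟨0, Nat.lt_of_lt_of_le (by norm_num) hd⟩ : Fin d) then ((Real.sqrt 2)⁻¹ : ℂ)
        else if i = (⟨1, Nat.lt_of_lt_of_le (by norm_num) hd⟩ : Fin d) then Complex.I * ((Real.sqrt 2)⁻¹ : ℂ) else 0) = 1 := by
  rw [cinner]
  rw [sum_pair hd _ (2⁻¹ : ℂ) (2⁻¹ : ℂ) ?_]
  · norm_num
  · intro i
    split_ifs with h0 h1 <;>
      first
        | (exact absurd (h0.symm.trans h1) (by simp [Fin.ext_iff]))
        | (rw [hAs, hA2, add_zero])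
        | (rw [star_mul', hAs, zero_add,
            show star Complex.I = -Complex.I from Complex.conj_I,
            show -Complex.I * (((Real.sqrt 2:ℝ):ℂ))⁻¹ * (Complex.I * (((Real.sqrt 2:ℝ):ℂ))⁻¹)
              = -(Complex.I * Complex.I) * ((((Real.sqrt 2:ℝ):ℂ))⁻¹ * (((Real.sqrt 2:ℝ):ℂ))⁻¹) from by ring,
            Complex.I_mul_I, hA2]
           norm_num)
        | simp

lemma psi0_c {d : ℕ} (hd : 2 ≤ d) :
    cinner (conjVec (fun i : Fin d =>
        if i = (⟨0, Nat.lt_of_lt_of_le (by norm_num) hd⟩ : Fin d) then ((Real.sqrt 2)⁻¹ : ℂ)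
        else if i = (⟨1, Nat.lt_of_lt_of_le (by norm_num) hd⟩ : Fin d) then Complex.I * ((Real.sqrt 2)⁻¹ : ℂ) else 0))
      (fun i : Fin d =>
        if i = (⟨0, Nat.lt_of_lt_of_le (by norm_num) hd⟩ : Fin d) then ((Real.sqrt 2)⁻¹ : ℂ)
        else if i = (⟨1, Nat.lt_of_lt_of_le (by norm_num) hd⟩ : Fin d) then Complex.I * ((Real.sqrt 2)⁻¹ : ℂ) else 0) = 0 := by
  rw [cinner]
  rw [sum_pair hd _ (2⁻¹ : ℂ) (-2⁻¹ : ℂ) ?_]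
  · norm_num
  · intro i
    simp only [conjVec, star_star]
    split_ifs with h0 h1 <;>
      first
        | (exact absurd (h0.symm.trans h1) (by simp [Fin.ext_iff]))
        | (rw [hA2, add_zero])
        | (rw [zero_add,
            show Complex.I * (((Real.sqrt 2:ℝ):ℂ))⁻¹ * (Complex.I * (((Real.sqrt 2:ℝ):ℂ))⁻¹)
              = (Complex.I * Complex.I) * ((((Real.sqrt 2:ℝ):ℂ))⁻¹ * (((Real.sqrt 2:ℝ):ℂ))⁻¹) from by ring,
            Complex.I_mul_I, hA2]
           norm_num)
        | simp


theorem WH_maximal_output_two_norm (d : ℕ) (hd : 2 ≤ d) (lam : ℝ)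
    (hlam : lam ∈ Set.Icc (0 : ℝ) 1) :
    IsGreatest {t : ℝ | ∃ ψ : Fin d → ℂ, cinner ψ ψ = 1 ∧
        t = (WH d lam (outer ψ) * WH d lam (outer ψ)).trace.re}
      ((((d : ℝ) - 2) * lam ^ 2 + 1) / ((d : ℝ) - 1)) ∧
    (WH d lam (outer (fun i : Fin d =>
        if i = (⟨0, by omega⟩ : Fin d) then ((Real.sqrt 2)⁻¹ : ℂ)
        else if i = (⟨1, by omega⟩ : Fin d) then Complex.I * ((Real.sqrt 2)⁻¹ : ℂ) else 0)) *
      WH d lam (outer (fun i : Fin d =>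
        if i = (⟨0, by omega⟩ : Fin d) then ((Real.sqrt 2)⁻¹ : ℂ)
        else if i = (⟨1, by omega⟩ : Fin d) then Complex.I * ((Real.sqrt 2)⁻¹ : ℂ) else 0))).trace.re
      = (((d : ℝ) - 2) * lam ^ 2 + 1) / ((d : ℝ) - 1) := by
  have hd1 : (1 : ℝ) < (d : ℝ) := by exact_mod_cast Nat.lt_of_lt_of_le one_lt_two hd
  have hden : ((d : ℝ) - 1) ≠ 0 := by linarith
  have hval0 : lam^2 + 2 * lam * ((1 - lam) * ((d : ℝ) - 1)⁻¹) * (1 - 0)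
        + ((1 - lam) * ((d : ℝ) - 1)⁻¹)^2 * ((d : ℝ) - 1)
      = (((d : ℝ) - 2) * lam ^ 2 + 1) / ((d : ℝ) - 1) := by
    field_simp
    ring
  have hattain : (WH d lam (outer (fun i : Fin d =>
        if i = (⟨0, by omega⟩ : Fin d) then ((Real.sqrt 2)⁻¹ : ℂ)
        else if i = (⟨1, by omega⟩ : Fin d) then Complex.I * ((Real.sqrt 2)⁻¹ : ℂ) else 0)) *
      WH d lam (outer (fun i : Fin d =>
        if i = (⟨0, by omega⟩ : Fin d) then ((Real.sqrt 2)⁻¹ : ℂ)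
        else if i = (⟨1, by omega⟩ : Fin d) then Complex.I * ((Real.sqrt 2)⁻¹ : ℂ) else 0))).trace.re
      = (((d : ℝ) - 2) * lam ^ 2 + 1) / ((d : ℝ) - 1) := by
    rw [re_trace_WH_sq d lam _ (psi0_norm hd), psi0_c hd]
    simpa using hval0
  refine ⟨⟨⟨_, psi0_norm hd, hattain.symm⟩, ?_⟩, hattain⟩
  rintro t ⟨ψ, hψ, rfl⟩
  rw [re_trace_WH_sq d lam ψ hψ]
  rw [← hval0]
  have hn : 0 ≤ Complex.normSq (cinner (conjVec ψ) ψ) := Complex.normSq_nonneg _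
  have he : 0 ≤ (1 - lam) * ((d : ℝ) - 1)⁻¹ := by
    apply mul_nonneg (by linarith [hlam.2]) (inv_nonneg.mpr (by linarith))
  nlinarith [mul_nonneg (mul_nonneg hlam.1 he) hn]
end
end

section
/- For a unit vector ψ₁₂ ∈ ℂ^d ⊗ ℂ^d, Tr((W_{λ,d}⊗W_{λ,d}(|ψ₁₂⟩⟨ψ₁₂|))²) = (((d-2)λ²+1)/(d-1))² + S_λ²|⟨ψ₁₂|ψ̄₁₂⟩|² − 2(S_λ + R_λ²)(S_λ + (d-2)Q_λ²)(1 − Tr(ρ₁²)) − S_λ·((d-2)λ²+1)/(d-1)·Tr(ρ₁ρ₁^T + ρ₂ρ₂^T), where Q_λ = (1-λ)/(d-1), R_λ = λ − Q_λ, S_λ = 2λQ_λ. -/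
open Matrix Finset Kronecker

noncomputable section

variable {d : ℕ}

local notation "Mat" => Matrix (Fin d × Fin d) (Fin d × Fin d) ℂ

set_option maxHeartbeats 1000000 in
lemma tm_basic (M : Mat) :
    (tensorMap (fun X => X) (fun X => X) M = M) ∧
    (tensorMap (fun X => X) (fun X => X.trace • 1) M = (ptr2 M) ⊗ₖ (1 : Matrix (Fin d) (Fin d) ℂ)) ∧
    (tensorMap (fun X => X) (fun X => Xᵀ) M = pt2 M) ∧
    (tensorMap (fun X => X.trace • 1) (fun X => X) M = (1 : Matrix (Fin d) (Fin d) ℂ) ⊗ₖ (ptr1 M)) ∧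
    (tensorMap (fun X => X.trace • 1) (fun X => X.trace • 1) M = M.trace • 1) ∧
    (tensorMap (fun X => X.trace • 1) (fun X => Xᵀ) M = (1 : Matrix (Fin d) (Fin d) ℂ) ⊗ₖ (ptr1 M)ᵀ) ∧
    (tensorMap (fun X => Xᵀ) (fun X => X) M = pt1 M) ∧
    (tensorMap (fun X => Xᵀ) (fun X => X.trace • 1) M = (ptr2 M)ᵀ ⊗ₖ (1 : Matrix (Fin d) (Fin d) ℂ)) ∧
    (tensorMap (fun X => Xᵀ) (fun X => Xᵀ) M = Mᵀ) := by
  refine ⟨?_,?_,?_,?_,?_,?_,?_,?_,?_⟩ <;>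
  · funext p q
    simp [tensorMap, Matrix.single, Matrix.of_apply, Matrix.trace, Matrix.diag,
      Matrix.one_apply, Matrix.smul_apply, Matrix.transpose_apply, kroneckerMap_apply,
      ptr1, ptr2, pt1, pt2, ite_and, mul_ite, ite_mul, Finset.sum_ite_eq, Finset.sum_ite_eq',
      Finset.mul_sum, Finset.sum_mul, mul_comm, Fintype.sum_prod_type, Prod.ext_iff, ite_and]

lemma tm_addl (F G H : Matrix (Fin d) (Fin d) ℂ → Matrix (Fin d) (Fin d) ℂ) (M : Mat) :
    tensorMap (fun X => F X + G X) H M = tensorMap F H M + tensorMap G H M := by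
  funext p q
  simp [tensorMap, Matrix.add_apply, add_mul, mul_add, Finset.sum_add_distrib]

lemma tm_smull (c : ℂ) (F H : Matrix (Fin d) (Fin d) ℂ → Matrix (Fin d) (Fin d) ℂ) (M : Mat) :
    tensorMap (fun X => c • F X) H M = c • tensorMap F H M := by
  funext p q
  simp [tensorMap, Matrix.smul_apply, smul_eq_mul, Finset.mul_sum, mul_assoc, mul_left_comm]

lemma tm_addr (F G H : Matrix (Fin d) (Fin d) ℂ → Matrix (Fin d) (Fin d) ℂ) (M : Mat) :
    tensorMap H (fun X => F X + G X) M = tensorMap H F M + tensorMap H G M := by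
  funext p q
  simp [tensorMap, Matrix.add_apply, add_mul, mul_add, Finset.sum_add_distrib]

lemma tm_smulr (c : ℂ) (F H : Matrix (Fin d) (Fin d) ℂ → Matrix (Fin d) (Fin d) ℂ) (M : Mat) :
    tensorMap H (fun X => c • F X) M = c • tensorMap H F M := by
  funext p q
  simp [tensorMap, Matrix.smul_apply, smul_eq_mul, Finset.mul_sum, mul_assoc, mul_left_comm]

lemma trace_mul_kron_one (M : Mat) (B : Matrix (Fin d) (Fin d) ℂ) :
    (M * (B ⊗ₖ (1 : Matrix (Fin d) (Fin d) ℂ))).trace = (ptr2 M * B).trace := by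
  calc (M * (B ⊗ₖ (1 : Matrix (Fin d) (Fin d) ℂ))).trace
      = ∑ a, ∑ b, ∑ c, M (a,b) (c,b) * B c a := by
        rw [Matrix.trace]
        simp only [Matrix.diag, Matrix.mul_apply, Fintype.sum_prod_type, kroneckerMap_apply,
          Matrix.one_apply, mul_ite, mul_one, mul_zero]
        exact Finset.sum_congr rfl fun a _ => Finset.sum_congr rfl fun b _ =>
          Finset.sum_congr rfl fun c _ => by simp
    _ = (ptr2 M * B).trace := by
        rw [Matrix.trace]
        simp only [Matrix.diag, Matrix.mul_apply, ptr2, Finset.sum_mul]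
        exact Finset.sum_congr rfl fun a _ => Finset.sum_comm

lemma trace_mul_one_kron (M : Mat) (B : Matrix (Fin d) (Fin d) ℂ) :
    (M * ((1 : Matrix (Fin d) (Fin d) ℂ) ⊗ₖ B)).trace = (ptr1 M * B).trace := by
  calc (M * ((1 : Matrix (Fin d) (Fin d) ℂ) ⊗ₖ B)).trace
      = ∑ a, ∑ b, ∑ e, M (a,b) (a,e) * B e b := by
        rw [Matrix.trace]
        simp only [Matrix.diag, Matrix.mul_apply, Fintype.sum_prod_type, kroneckerMap_apply,
          Matrix.one_apply, ite_mul, one_mul, zero_mul, mul_ite, mul_zero]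
        refine Finset.sum_congr rfl fun a _ => Finset.sum_congr rfl fun b _ => ?_
        rw [Finset.sum_comm]
        simp
    _ = (ptr1 M * B).trace := by
        rw [Matrix.trace]
        simp only [Matrix.diag, Matrix.mul_apply, ptr1, Finset.sum_mul]
        rw [Finset.sum_comm]
        exact Finset.sum_congr rfl fun b _ => Finset.sum_comm

lemma comm12 (f : Fin d → Fin d → Fin d → Fin d → ℂ) :
    ∑ a, ∑ b, ∑ c, ∑ e, f a b c e = ∑ b, ∑ a, ∑ c, ∑ e, f a b c e := Finset.sum_comm

lemma comm23 (f : Fin d → Fin d → Fin d → Fin d → ℂ) :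
    ∑ a, ∑ b, ∑ c, ∑ e, f a b c e = ∑ a, ∑ c, ∑ b, ∑ e, f a b c e :=
  Finset.sum_congr rfl fun _ _ => Finset.sum_comm

lemma comm34 (f : Fin d → Fin d → Fin d → Fin d → ℂ) :
    ∑ a, ∑ b, ∑ c, ∑ e, f a b c e = ∑ a, ∑ b, ∑ e, ∑ c, f a b c e :=
  Finset.sum_congr rfl fun _ _ => Finset.sum_congr rfl fun _ _ => Finset.sum_comm

variable (ψ : Fin d × Fin d → ℂ)

lemma ptr2_pt1 : ptr2 (pt1 (outer ψ)) = (ptr2 (outer ψ))ᵀ := by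
  funext i j; simp [ptr2, pt1, outer, Matrix.transpose_apply]

lemma ptr1_pt1 : ptr1 (pt1 (outer ψ)) = ptr1 (outer ψ) := by
  funext i j; simp [ptr1, pt1, outer]

lemma ptr2_pt2 : ptr2 (pt2 (outer ψ)) = ptr2 (outer ψ) := by
  funext i j; simp [ptr2, pt2, outer]

lemma ptr1_pt2 : ptr1 (pt2 (outer ψ)) = (ptr1 (outer ψ))ᵀ := by
  funext i j; simp [ptr1, pt2, outer, Matrix.transpose_apply]

lemma ptr2_t : ptr2 ((outer ψ)ᵀ) = (ptr2 (outer ψ))ᵀ := by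
  funext i j; simp [ptr2, outer, Matrix.transpose_apply]

lemma ptr1_t : ptr1 ((outer ψ)ᵀ) = (ptr1 (outer ψ))ᵀ := by
  funext i j; simp [ptr1, outer, Matrix.transpose_apply]

lemma tr_r1 : (ptr2 (outer ψ)).trace = cinner ψ ψ := by
  simp only [Matrix.trace, Matrix.diag, ptr2, outer, cinner, Fintype.sum_prod_type]
  exact Finset.sum_congr rfl fun _ _ => Finset.sum_congr rfl fun _ _ => by ring

lemma tr_r2 : (ptr1 (outer ψ)).trace = cinner ψ ψ := by
  simp only [Matrix.trace, Matrix.diag, ptr1, outer, cinner, Fintype.sum_prod_type]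
  rw [Finset.sum_comm]
  exact Finset.sum_congr rfl fun _ _ => Finset.sum_congr rfl fun _ _ => by ring

lemma tr_rho : (outer ψ).trace = cinner ψ ψ := by
  simp only [Matrix.trace, Matrix.diag, outer, cinner]
  exact Finset.sum_congr rfl fun _ _ => by ring

lemma tr_pt1 : (pt1 (outer ψ)).trace = cinner ψ ψ := by
  simp only [Matrix.trace, Matrix.diag, pt1, outer, cinner]
  exact Finset.sum_congr rfl fun _ _ => by ring

lemma tr_pt2 : (pt2 (outer ψ)).trace = cinner ψ ψ := by
  simp only [Matrix.trace, Matrix.diag, pt2, outer, cinner]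
  exact Finset.sum_congr rfl fun _ _ => by ring

lemma trA : (outer ψ * outer ψ).trace = cinner ψ ψ * cinner ψ ψ := by
  simp only [Matrix.trace, Matrix.diag, Matrix.mul_apply, outer, cinner,
    Fintype.sum_prod_type, Finset.sum_mul, Finset.mul_sum]
  exact Finset.sum_congr rfl fun _ _ => Finset.sum_congr rfl fun _ _ =>
    Finset.sum_congr rfl fun _ _ => Finset.sum_congr rfl fun _ _ => by ring

lemma trApt1 : (outer ψ * pt1 (outer ψ)).trace
    = (ptr2 (outer ψ) * (ptr2 (outer ψ))ᵀ).trace := by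
  simp only [Matrix.trace, Matrix.diag, Matrix.mul_apply, Matrix.transpose_apply, outer, pt1,
    ptr2, Fintype.sum_prod_type, Finset.sum_mul, Finset.mul_sum]
  rw [comm23]
  exact Finset.sum_congr rfl fun _ _ => Finset.sum_congr rfl fun _ _ =>
    Finset.sum_congr rfl fun _ _ => Finset.sum_congr rfl fun _ _ => by ring

lemma trApt2 : (outer ψ * pt2 (outer ψ)).trace
    = (ptr1 (outer ψ) * (ptr1 (outer ψ))ᵀ).trace := by
  simp only [Matrix.trace, Matrix.diag, Matrix.mul_apply, Matrix.transpose_apply, outer, pt2,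
    ptr1, Fintype.sum_prod_type, Finset.sum_mul, Finset.mul_sum]
  rw [comm12, comm23, comm34, comm23, comm34]
  exact Finset.sum_congr rfl fun _ _ => Finset.sum_congr rfl fun _ _ =>
    Finset.sum_congr rfl fun _ _ => Finset.sum_congr rfl fun _ _ => by ring

lemma trAt : (outer ψ * (outer ψ)ᵀ).trace
    = star (cinner ψ (conjVec ψ)) * cinner ψ (conjVec ψ) := by
  simp only [Matrix.trace, Matrix.diag, Matrix.mul_apply, Matrix.transpose_apply, outer, cinner,
    conjVec, star_sum, star_mul', star_star, Fintype.sum_prod_type, Finset.sum_mul,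
    Finset.mul_sum]
  rw [comm23, comm12, comm34, comm23]
  exact Finset.sum_congr rfl fun _ _ => Finset.sum_congr rfl fun _ _ =>
    Finset.sum_congr rfl fun _ _ => Finset.sum_congr rfl fun _ _ => by ring

lemma trpt1pt1 : (pt1 (outer ψ) * pt1 (outer ψ)).trace = cinner ψ ψ * cinner ψ ψ := by
  simp only [Matrix.trace, Matrix.diag, Matrix.mul_apply, outer, pt1, cinner,
    Fintype.sum_prod_type, Finset.sum_mul, Finset.mul_sum]
  rw [comm34, comm23, comm34]
  exact Finset.sum_congr rfl fun _ _ => Finset.sum_congr rfl fun _ _ =>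
    Finset.sum_congr rfl fun _ _ => Finset.sum_congr rfl fun _ _ => by ring

lemma trpt1pt2 : (pt1 (outer ψ) * pt2 (outer ψ)).trace
    = star (cinner ψ (conjVec ψ)) * cinner ψ (conjVec ψ) := by
  simp only [Matrix.trace, Matrix.diag, Matrix.mul_apply, outer, pt1, pt2, cinner, conjVec,
    star_sum, star_mul', star_star, Fintype.sum_prod_type, Finset.sum_mul, Finset.mul_sum]
  rw [comm12, comm23, comm12, comm23, comm12, comm34, comm23]
  exact Finset.sum_congr rfl fun _ _ => Finset.sum_congr rfl fun _ _ =>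
    Finset.sum_congr rfl fun _ _ => Finset.sum_congr rfl fun _ _ => by ring

lemma trpt1t : (pt1 (outer ψ) * (outer ψ)ᵀ).trace
    = (ptr1 (outer ψ) * (ptr1 (outer ψ))ᵀ).trace := by
  simp only [Matrix.trace, Matrix.diag, Matrix.mul_apply, Matrix.transpose_apply, outer, pt1,
    ptr1, Fintype.sum_prod_type, Finset.sum_mul, Finset.mul_sum]
  rw [comm12, comm34, comm23, comm34]
  exact Finset.sum_congr rfl fun _ _ => Finset.sum_congr rfl fun _ _ =>
    Finset.sum_congr rfl fun _ _ => Finset.sum_congr rfl fun _ _ => by ring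

lemma trpt2pt2 : (pt2 (outer ψ) * pt2 (outer ψ)).trace = cinner ψ ψ * cinner ψ ψ := by
  simp only [Matrix.trace, Matrix.diag, Matrix.mul_apply, outer, pt2, cinner,
    Fintype.sum_prod_type, Finset.sum_mul, Finset.mul_sum]
  rw [comm34, comm23, comm34]
  exact Finset.sum_congr rfl fun _ _ => Finset.sum_congr rfl fun _ _ =>
    Finset.sum_congr rfl fun _ _ => Finset.sum_congr rfl fun _ _ => by ring

lemma trpt2t : (pt2 (outer ψ) * (outer ψ)ᵀ).trace
    = (ptr2 (outer ψ) * (ptr2 (outer ψ))ᵀ).trace := by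
  simp only [Matrix.trace, Matrix.diag, Matrix.mul_apply, Matrix.transpose_apply, outer, pt2,
    ptr2, Fintype.sum_prod_type, Finset.sum_mul, Finset.mul_sum]
  rw [comm23]
  exact Finset.sum_congr rfl fun _ _ => Finset.sum_congr rfl fun _ _ =>
    Finset.sum_congr rfl fun _ _ => Finset.sum_congr rfl fun _ _ => by ring

lemma trtt : ((outer ψ)ᵀ * (outer ψ)ᵀ).trace = cinner ψ ψ * cinner ψ ψ := by
  simp only [Matrix.trace, Matrix.diag, Matrix.mul_apply, Matrix.transpose_apply, outer, cinner,
    Fintype.sum_prod_type, Finset.sum_mul, Finset.mul_sum]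
  exact Finset.sum_congr rfl fun _ _ => Finset.sum_congr rfl fun _ _ =>
    Finset.sum_congr rfl fun _ _ => Finset.sum_congr rfl fun _ _ => by ring

lemma h3 : (ptr1 (outer ψ) * ptr1 (outer ψ)).trace
    = (ptr2 (outer ψ) * ptr2 (outer ψ)).trace := by
  simp only [Matrix.trace, Matrix.diag, Matrix.mul_apply, outer, ptr1, ptr2,
    Finset.sum_mul, Finset.mul_sum]
  rw [comm23, comm12, comm34, comm23]
  exact Finset.sum_congr rfl fun _ _ => Finset.sum_congr rfl fun _ _ =>
    Finset.sum_congr rfl fun _ _ => Finset.sum_congr rfl fun _ _ => by ring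

variable (lam : ℝ)

lemma hWHfun : WH d lam = fun X : Matrix (Fin d) (Fin d) ℂ =>
    ((lam : ℂ) • X + (((1 - lam : ℝ) : ℂ) * ((d : ℂ) - 1)⁻¹) • (X.trace • (1 : Matrix (Fin d) (Fin d) ℂ)))
      + (-(((1 - lam : ℝ) : ℂ) * ((d : ℂ) - 1)⁻¹)) • Xᵀ := by
  funext X
  simp [WH, smul_sub, sub_eq_add_neg, neg_smul, add_assoc]

lemma tm_smul_hl (c : ℂ) (H : Matrix (Fin d) (Fin d) ℂ → Matrix (Fin d) (Fin d) ℂ) (M : Mat) :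
    tensorMap (HSMul.hSMul c) H M = c • tensorMap (fun X => X) H M := tm_smull c _ H M

lemma tm_smul_hr (c : ℂ) (H : Matrix (Fin d) (Fin d) ℂ → Matrix (Fin d) (Fin d) ℂ) (M : Mat) :
    tensorMap H (HSMul.hSMul c) M = c • tensorMap H (fun X => X) M := tm_smulr c _ H M

lemma tm_transl (H : Matrix (Fin d) (Fin d) ℂ → Matrix (Fin d) (Fin d) ℂ) (M : Mat) :
    tensorMap Matrix.transpose H M = tensorMap (fun X => Xᵀ) H M := rfl

lemma tm_transr (H : Matrix (Fin d) (Fin d) ℂ → Matrix (Fin d) (Fin d) ℂ) (M : Mat) :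
    tensorMap H Matrix.transpose M = tensorMap H (fun X => Xᵀ) M := rfl

set_option maxHeartbeats 1000000 in
lemma hN (M : Mat) :
    tensorMap (WH d lam) (WH d lam) M =
      (((lam:ℂ))*((lam:ℂ))) • M
      + (((lam:ℂ))*((((1 - lam : ℝ) : ℂ) * ((d : ℂ) - 1)⁻¹))) • ((ptr2 M) ⊗ₖ (1 : Matrix (Fin d) (Fin d) ℂ))
      + (-(((lam:ℂ))*((((1 - lam : ℝ) : ℂ) * ((d : ℂ) - 1)⁻¹)))) • pt2 M
      + (((lam:ℂ))*((((1 - lam : ℝ) : ℂ) * ((d : ℂ) - 1)⁻¹))) • ((1 : Matrix (Fin d) (Fin d) ℂ) ⊗ₖ (ptr1 M))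
      + ((((((1 - lam : ℝ) : ℂ) * ((d : ℂ) - 1)⁻¹))*((((1 - lam : ℝ) : ℂ) * ((d : ℂ) - 1)⁻¹)) * M.trace) • (1 : Mat))
      + (-(((((1 - lam : ℝ) : ℂ) * ((d : ℂ) - 1)⁻¹))*((((1 - lam : ℝ) : ℂ) * ((d : ℂ) - 1)⁻¹)))) • ((1 : Matrix (Fin d) (Fin d) ℂ) ⊗ₖ (ptr1 M)ᵀ)
      + (-(((lam:ℂ))*((((1 - lam : ℝ) : ℂ) * ((d : ℂ) - 1)⁻¹)))) • pt1 M
      + (-(((((1 - lam : ℝ) : ℂ) * ((d : ℂ) - 1)⁻¹))*((((1 - lam : ℝ) : ℂ) * ((d : ℂ) - 1)⁻¹)))) • ((ptr2 M)ᵀ ⊗ₖ (1 : Matrix (Fin d) (Fin d) ℂ))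
      + (((((1 - lam : ℝ) : ℂ) * ((d : ℂ) - 1)⁻¹))*((((1 - lam : ℝ) : ℂ) * ((d : ℂ) - 1)⁻¹))) • Mᵀ := by
  rw [hWHfun]
  simp only [tm_addl, tm_addr, tm_smull, tm_smulr, tm_smul_hl, tm_smul_hr, tm_transl, tm_transr,
    (tm_basic M).1, (tm_basic M).2.1, (tm_basic M).2.2.1, (tm_basic M).2.2.2.1,
    (tm_basic M).2.2.2.2.1, (tm_basic M).2.2.2.2.2.1, (tm_basic M).2.2.2.2.2.2.1,
    (tm_basic M).2.2.2.2.2.2.2.1, (tm_basic M).2.2.2.2.2.2.2.2]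
  module

-- kronecker product collapses
lemma kcol1 (X Y : Matrix (Fin d) (Fin d) ℂ) :
    (X ⊗ₖ (1 : Matrix (Fin d) (Fin d) ℂ)) * (Y ⊗ₖ (1 : Matrix (Fin d) (Fin d) ℂ))
      = (X * Y) ⊗ₖ (1 : Matrix (Fin d) (Fin d) ℂ) := by
  rw [← Matrix.mul_kronecker_mul, Matrix.one_mul]

lemma kcol2 (X Y : Matrix (Fin d) (Fin d) ℂ) :
    (X ⊗ₖ (1 : Matrix (Fin d) (Fin d) ℂ)) * ((1 : Matrix (Fin d) (Fin d) ℂ) ⊗ₖ Y)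
      = X ⊗ₖ Y := by
  rw [← Matrix.mul_kronecker_mul, Matrix.one_mul, Matrix.mul_one]

lemma kcol3 (X Y : Matrix (Fin d) (Fin d) ℂ) :
    ((1 : Matrix (Fin d) (Fin d) ℂ) ⊗ₖ X) * (Y ⊗ₖ (1 : Matrix (Fin d) (Fin d) ℂ))
      = Y ⊗ₖ X := by
  rw [← Matrix.mul_kronecker_mul, Matrix.one_mul, Matrix.mul_one]

lemma kcol4 (X Y : Matrix (Fin d) (Fin d) ℂ) :
    ((1 : Matrix (Fin d) (Fin d) ℂ) ⊗ₖ X) * ((1 : Matrix (Fin d) (Fin d) ℂ) ⊗ₖ Y)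
      = (1 : Matrix (Fin d) (Fin d) ℂ) ⊗ₖ (X * Y) := by
  rw [← Matrix.mul_kronecker_mul, Matrix.one_mul]

-- mirrored trace helpers
lemma trace_kron_one_mul (M : Mat) (B : Matrix (Fin d) (Fin d) ℂ) :
    ((B ⊗ₖ (1 : Matrix (Fin d) (Fin d) ℂ)) * M).trace = (ptr2 M * B).trace := by
  rw [Matrix.trace_mul_comm]; exact trace_mul_kron_one M B

lemma trace_one_kron_mul (M : Mat) (B : Matrix (Fin d) (Fin d) ℂ) :
    (((1 : Matrix (Fin d) (Fin d) ℂ) ⊗ₖ B) * M).trace = (ptr1 M * B).trace := by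
  rw [Matrix.trace_mul_comm]; exact trace_mul_one_kron M B

-- small trace normalizations
lemma stA : ((ptr2 (outer ψ))ᵀ * ptr2 (outer ψ)).trace
    = (ptr2 (outer ψ) * (ptr2 (outer ψ))ᵀ).trace := Matrix.trace_mul_comm _ _

lemma stB : ((ptr2 (outer ψ))ᵀ * (ptr2 (outer ψ))ᵀ).trace
    = (ptr2 (outer ψ) * ptr2 (outer ψ)).trace := by
  rw [← Matrix.transpose_mul, Matrix.trace_transpose]

lemma stD : ((ptr1 (outer ψ))ᵀ * ptr1 (outer ψ)).trace
    = (ptr1 (outer ψ) * (ptr1 (outer ψ))ᵀ).trace := Matrix.trace_mul_comm _ _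

lemma stE : ((ptr1 (outer ψ))ᵀ * (ptr1 (outer ψ))ᵀ).trace
    = (ptr2 (outer ψ) * ptr2 (outer ψ)).trace := by
  rw [← Matrix.transpose_mul, Matrix.trace_transpose]; exact h3 ψ

-- mirrored R x R lemmas
lemma trApt1' : (pt1 (outer ψ) * outer ψ).trace
    = (ptr2 (outer ψ) * (ptr2 (outer ψ))ᵀ).trace := by
  rw [Matrix.trace_mul_comm]; exact trApt1 ψ

lemma trApt2' : (pt2 (outer ψ) * outer ψ).trace
    = (ptr1 (outer ψ) * (ptr1 (outer ψ))ᵀ).trace := by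
  rw [Matrix.trace_mul_comm]; exact trApt2 ψ

lemma trAt' : ((outer ψ)ᵀ * outer ψ).trace
    = star (cinner ψ (conjVec ψ)) * cinner ψ (conjVec ψ) := by
  rw [Matrix.trace_mul_comm]; exact trAt ψ

lemma trpt1pt2' : (pt2 (outer ψ) * pt1 (outer ψ)).trace
    = star (cinner ψ (conjVec ψ)) * cinner ψ (conjVec ψ) := by
  rw [Matrix.trace_mul_comm]; exact trpt1pt2 ψ

lemma trpt1t' : ((outer ψ)ᵀ * pt1 (outer ψ)).trace
    = (ptr1 (outer ψ) * (ptr1 (outer ψ))ᵀ).trace := by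
  rw [Matrix.trace_mul_comm]; exact trpt1t ψ

lemma trpt2t' : ((outer ψ)ᵀ * pt2 (outer ψ)).trace
    = (ptr2 (outer ψ) * (ptr2 (outer ψ))ᵀ).trace := by
  rw [Matrix.trace_mul_comm]; exact trpt2t ψ

-- realness
lemma star_Tc : star ((ptr2 (outer ψ) * ptr2 (outer ψ)).trace)
    = (ptr2 (outer ψ) * ptr2 (outer ψ)).trace := by
  simp only [Matrix.trace, Matrix.diag, Matrix.mul_apply, ptr2, outer, star_sum, star_mul',
    star_star, Finset.sum_mul, Finset.mul_sum]
  rw [comm12]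
  exact Finset.sum_congr rfl fun _ _ => Finset.sum_congr rfl fun _ _ =>
    Finset.sum_congr rfl fun _ _ => Finset.sum_congr rfl fun _ _ => by ring

lemma star_U1 : star ((ptr2 (outer ψ) * (ptr2 (outer ψ))ᵀ).trace)
    = (ptr2 (outer ψ) * (ptr2 (outer ψ))ᵀ).trace := by
  simp only [Matrix.trace, Matrix.diag, Matrix.mul_apply, Matrix.transpose_apply, ptr2, outer,
    star_sum, star_mul', star_star, Finset.sum_mul, Finset.mul_sum]
  rw [comm12]
  exact Finset.sum_congr rfl fun _ _ => Finset.sum_congr rfl fun _ _ =>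
    Finset.sum_congr rfl fun _ _ => Finset.sum_congr rfl fun _ _ => by ring

lemma star_U2 : star ((ptr1 (outer ψ) * (ptr1 (outer ψ))ᵀ).trace)
    = (ptr1 (outer ψ) * (ptr1 (outer ψ))ᵀ).trace := by
  simp only [Matrix.trace, Matrix.diag, Matrix.mul_apply, Matrix.transpose_apply, ptr1, outer,
    star_sum, star_mul', star_star, Finset.sum_mul, Finset.mul_sum]
  rw [comm12]
  exact Finset.sum_congr rfl fun _ _ => Finset.sum_congr rfl fun _ _ =>
    Finset.sum_congr rfl fun _ _ => Finset.sum_congr rfl fun _ _ => by ring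

set_option maxHeartbeats 4000000 in
theorem WH_tensor_output_two_norm (d : ℕ) (hd : 2 ≤ d) (lam : ℝ)
    (hlam : lam ∈ Set.Icc (0 : ℝ) 1) (ψ : Fin d × Fin d → ℂ) (hψ : cinner ψ ψ = 1) :
    (tensorMap (WH d lam) (WH d lam) (outer ψ) *
        tensorMap (WH d lam) (WH d lam) (outer ψ)).trace =
      (((((d : ℝ) - 2) * lam ^ 2 + 1) / ((d : ℝ) - 1)) ^ 2
        + (2 * lam * ((1 - lam) / ((d : ℝ) - 1))) ^ 2 * ‖cinner ψ (conjVec ψ)‖ ^ 2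
        - 2 * (2 * lam * ((1 - lam) / ((d : ℝ) - 1))
                + (lam - (1 - lam) / ((d : ℝ) - 1)) ^ 2) *
              (2 * lam * ((1 - lam) / ((d : ℝ) - 1))
                + ((d : ℝ) - 2) * ((1 - lam) / ((d : ℝ) - 1)) ^ 2) *
              (1 - (ptr2 (outer ψ) * ptr2 (outer ψ)).trace.re)
        - (2 * lam * ((1 - lam) / ((d : ℝ) - 1))) *
              ((((d : ℝ) - 2) * lam ^ 2 + 1) / ((d : ℝ) - 1)) *
              ((ptr2 (outer ψ) * (ptr2 (outer ψ))ᵀ).trace.re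
                + (ptr1 (outer ψ) * (ptr1 (outer ψ))ᵀ).trace.re) : ℝ) := by
  have htr : (outer ψ).trace = 1 := by rw [tr_rho]; exact hψ
  have hd1 : ((d:ℂ) - 1) ≠ 0 := by
    have : (d:ℂ) ≠ 1 := by
      intro h
      have : (d:ℕ) = 1 := by exact_mod_cast h
      omega
    exact sub_ne_zero.mpr this
  have hdr : ((d:ℝ) - 1) ≠ 0 := by
    have : (d:ℝ) ≠ 1 := by
      intro h
      have : (d:ℕ) = 1 := by exact_mod_cast h
      omega
    exact sub_ne_zero.mpr this
  have hTc : (((ptr2 (outer ψ) * ptr2 (outer ψ)).trace.re : ℝ) : ℂ)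
      = (ptr2 (outer ψ) * ptr2 (outer ψ)).trace :=
    Complex.conj_eq_iff_re.mp (star_Tc ψ)
  have hU1 : (((ptr2 (outer ψ) * (ptr2 (outer ψ))ᵀ).trace.re : ℝ) : ℂ)
      = (ptr2 (outer ψ) * (ptr2 (outer ψ))ᵀ).trace :=
    Complex.conj_eq_iff_re.mp (star_U1 ψ)
  have hU2 : (((ptr1 (outer ψ) * (ptr1 (outer ψ))ᵀ).trace.re : ℝ) : ℂ)
      = (ptr1 (outer ψ) * (ptr1 (outer ψ))ᵀ).trace :=
    Complex.conj_eq_iff_re.mp (star_U2 ψ)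
  have hCnorm : ((‖cinner ψ (conjVec ψ)‖ ^ 2 : ℝ) : ℂ)
      = star (cinner ψ (conjVec ψ)) * cinner ψ (conjVec ψ) := by
    rw [mul_comm, ← Complex.normSq_eq_norm_sq, ← Complex.mul_conj]
    rfl
  rw [hN, htr]
  -- expand the trace of the product of the 9-term sums
  simp only [add_mul, mul_add, smul_mul_assoc, mul_smul_comm, Matrix.trace_add,
    Matrix.trace_smul, smul_eq_mul, smul_smul, mul_one, Matrix.mul_one, Matrix.one_mul,
    kcol1, kcol2, kcol3, kcol4]
  simp only [trace_mul_kron_one, trace_mul_one_kron, trace_kron_one_mul, trace_one_kron_mul,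
    Matrix.trace_kronecker, Matrix.trace_one, Matrix.trace_transpose,
    ptr2_pt1, ptr1_pt1, ptr2_pt2, ptr1_pt2, ptr2_t, ptr1_t,
    trA, trApt1, trApt2, trAt, trpt1pt1, trpt1pt2, trpt1t, trpt2pt2, trpt2t, trtt,
    trApt1', trApt2', trAt', trpt1pt2', trpt1t', trpt2t',
    stA, stB, stD, stE, h3,
    tr_r1, tr_r2, tr_rho, tr_pt1, tr_pt2, hψ,
    Fintype.card_prod, Fintype.card_fin, Nat.cast_mul, mul_one, one_mul]
  rw [← hTc, ← hU1, ← hU2, ← hCnorm]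
  generalize (ptr2 (outer ψ) * ptr2 (outer ψ)).trace.re = t
  generalize (ptr2 (outer ψ) * (ptr2 (outer ψ))ᵀ).trace.re = u1
  generalize (ptr1 (outer ψ) * (ptr1 (outer ψ))ᵀ).trace.re = u2
  generalize ‖cinner ψ (conjVec ψ)‖ = nc
  push_cast
  have hw : ((d:ℂ) - 1) * ((d:ℂ) - 1)⁻¹ = 1 := mul_inv_cancel₀ hd1
  linear_combination ((1:ℂ)*((d:ℂ)-1)⁻¹^2 + (-1:ℂ)*((d:ℂ)-1)⁻¹^3 + (1:ℂ)*(d:ℂ)*((d:ℂ)-1)⁻¹^3 + (-2:ℂ)*(lam:ℂ)*((d:ℂ)-1)⁻¹^2*(u2:ℂ) + (-2:ℂ)*(lam:ℂ)*((d:ℂ)-1)⁻¹^2*(u1:ℂ) + (4:ℂ)*(lam:ℂ)*((d:ℂ)-1)⁻¹^3 + (-4:ℂ)*(lam:ℂ)*(d:ℂ)*((d:ℂ)-1)⁻¹^3 + (-6:ℂ)*(lam:ℂ)^2*((d:ℂ)-1)⁻¹^2 + (6:ℂ)*(lam:ℂ)^2*((d:ℂ)-1)⁻¹^2*(u2:ℂ)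 + (6:ℂ)*(lam:ℂ)^2*((d:ℂ)-1)⁻¹^2*(u1:ℂ) + (-6:ℂ)*(lam:ℂ)^2*((d:ℂ)-1)⁻¹^3 + (6:ℂ)*(lam:ℂ)^2*(d:ℂ)*((d:ℂ)-1)⁻¹^3 + (-4:ℂ)*(lam:ℂ)^3*((d:ℂ)-1)⁻¹ + (2:ℂ)*(lam:ℂ)^3*((d:ℂ)-1)⁻¹*(u2:ℂ) + (2:ℂ)*(lam:ℂ)^3*((d:ℂ)-1)⁻¹*(u1:ℂ) + (8:ℂ)*(lam:ℂ)^3*((d:ℂ)-1)⁻¹^2 + (-6:ℂ)*(lam:ℂ)^3*((d:ℂ)-1)⁻¹^2*(u2:ℂ) + (-6:ℂ)*(lam:ℂ)^3*((d:ℂ)-1)⁻¹^2*(u1:ℂ) + (4:ℂ)*(lam:ℂ)^3*((d:ℂ)-1)⁻¹^3 + (-4:ℂ)*(lam:ℂ)^3*(d:ℂ)*((d:ℂ)-1)⁻¹^3 + (-1:ℂ)*(lam:ℂ)^4 + (5:ℂ)*(lam:ℂ)^4*((d:ℂ)-1)⁻¹ + (-2:ℂ)*(lam:ℂ)^4*((d:ℂ)-1)⁻¹*(u2:ℂ)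 + (-2:ℂ)*(lam:ℂ)^4*((d:ℂ)-1)⁻¹*(u1:ℂ) + (-3:ℂ)*(lam:ℂ)^4*((d:ℂ)-1)⁻¹^2 + (2:ℂ)*(lam:ℂ)^4*((d:ℂ)-1)⁻¹^2*(u2:ℂ) + (2:ℂ)*(lam:ℂ)^4*((d:ℂ)-1)⁻¹^2*(u1:ℂ) + (-1:ℂ)*(lam:ℂ)^4*((d:ℂ)-1)⁻¹^3 + (-1:ℂ)*(lam:ℂ)^4*(d:ℂ)*((d:ℂ)-1)⁻¹ + (1:ℂ)*(lam:ℂ)^4*(d:ℂ)*((d:ℂ)-1)⁻¹^3) * hw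
end
end
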